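/- Let G be a group and D a finite central subgroup of G. Let {H_i | i ∈ ℕ} be a descending chain of subgroups of G. If there is n ∈ ℕ such that D·H_n = D·H_i for all i ≥ n, then there is m ∈ ℕ such that H_m = H_i for all i ≥ m. -/
import Mathlib

theorem stmt_0 {G : Type*} [Group G] (D : Subgroup G) (hDc : D ≤ Subgroup.center G)
    (hDfin : Finite D) (H : ℕ → Subgroup G) (hdesc : ∀ i, H (i + 1) ≤ H i)
    (hn : ∃ n : ℕ, ∀ i ≥ n, D ⊔ H n = D ⊔ H i) :
    ∃ m : ℕ, ∀ i ≥ m, H m = H i := by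
  obtain ⟨n, hn⟩ := hn
  have hanti : ∀ i j, i ≤ j → H j ≤ H i := fun i j hij =>
    antitone_nat_of_succ_le hdesc hij
  haveI hDnorm : D.Normal := by
    constructor
    intro d hd g
    have : d ∈ Subgroup.center G := hDc hd
    rw [Subgroup.mem_center_iff] at this
    simpa [this g, mul_assoc] using hd
  -- finiteness of intersections
  haveI : ∀ i, Finite (D ⊓ H i : Subgroup G) := fun i =>
    Finite.of_injective (Subgroup.inclusion (inf_le_left : D ⊓ H i ≤ D))
      (Subgroup.inclusion_injective _)
  -- pick m ≥ n minimizing card of D ⊓ H i over i ≥ n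
  obtain ⟨m, hmn, hmin⟩ : ∃ m ≥ n, ∀ i ≥ n,
      Nat.card (D ⊓ H m : Subgroup G) ≤ Nat.card (D ⊓ H i : Subgroup G) := by
    have hS : {c | ∃ i ≥ n, Nat.card (D ⊓ H i : Subgroup G) = c}.Nonempty :=
      ⟨_, n, le_refl n, rfl⟩
    obtain ⟨m, hm, hc⟩ := Nat.sInf_mem hS
    refine ⟨m, hm, fun i hi => ?_⟩
    rw [hc]
    exact Nat.sInf_le ⟨i, hi, rfl⟩
  refine ⟨m, fun i hi => le_antisymm ?_ (hanti m i hi)⟩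
  intro x hx
  have hxsup : x ∈ D ⊔ H i := by
    rw [← hn i (le_trans hmn hi), hn m hmn]
    exact (le_sup_right : H m ≤ D ⊔ H m) hx
  rw [← SetLike.mem_coe, Subgroup.normal_mul] at hxsup
  obtain ⟨d, hd, h, hh, rfl⟩ := hxsup
  have hdHm : d ∈ H m := by
    have : d = (d * h) * h⁻¹ := by group
    rw [this]
    exact mul_mem hx (inv_mem (hanti m i hi hh))
  -- D ⊓ H i = D ⊓ H m
  have hle : (D ⊓ H i : Subgroup G) ≤ D ⊓ H m :=
    inf_le_inf_left D (hanti m i hi)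
  have heq : (D ⊓ H i : Subgroup G) = D ⊓ H m :=
    Subgroup.eq_of_le_of_card_ge hle (hmin i (le_trans hmn hi))
  have : d ∈ D ⊓ H i := heq ▸ ⟨hd, hdHm⟩
  exact mul_mem this.2 hh
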